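/- For a C² regular curve γ on a regular surface Σ in the affine group with ω(γ̇(t)) = 0 and d/dt(ω(γ̇(t))) = 0 at t, the signed geodesic curvature satisfies lim_{L→∞} k^{L,s}_{γ,Σ}(t) = 0; indeed ⟨∇^{Σ,L}_{γ̇}γ̇, J_L(γ̇)⟩_{L,Σ} = O(L^{-1/2}) as L → ∞. -/
import Mathlib


open Filter

/-- Lemma 3.6, horizontal case, of the paper.  Let `Σ = {u = 0}` be a regular surface in the affine
group away from characteristic points, with `p = X1u`, `q = X2u`, `u3 = X3u`,
`l = √(p²+q²) > 0`, `l_L(L) = √(p²+q²+u3²/L)`, `r̄_L(L) = (u3/√L)/l_L(L)`,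
`p̄ = p/l`, `q̄ = q/l`.  Let `γ` be a `C²` regular curve on `Σ` with curve data
`g1 = γ₁ > 0`, derivatives `d1,d2,d3`, second derivatives `dd1,dd3`,
`w = ω(γ̇(t)) = d2/g1 - d3 = 0` and `w' = (d/dt)ω(γ̇(t)) = 0`.  With
`α = q̄(γ̇₁/γ₁) - p̄γ̇₃` (so `γ̇ = α e1 - (l_L/l)√L w e2`), ambient covariant derivative
components `A L, B L, C`, and `∇^{Σ,L}_{γ̇}γ̇` frame components
`c1 L = q̄ A L - p̄ B L`, `c2 L = r̄_L p̄ A L + r̄_L q̄ B L - (l/l_L)√L C`, the signed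
geodesic curvature `k^{L,s}_{γ,Σ} = ⟨∇^{Σ,L}_{γ̇}γ̇, J_L(γ̇)⟩/‖γ̇‖³` tends to `0` as
`L → ∞`; indeed `⟨∇^{Σ,L}_{γ̇}γ̇, J_L(γ̇)⟩ = O(L^{-1/2})` as `L → ∞`. -/
theorem affine_signed_geodesic_curvature_limit_horizontal
    (p q u3 g1 d1 d2 d3 dd1 dd3 w w' : ℝ)
    (hpq : 0 < p ^ 2 + q ^ 2) (hg1 : 0 < g1)
    (l pb qb : ℝ) (hl : l = Real.sqrt (p ^ 2 + q ^ 2))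
    (hpb : pb = p / l) (hqb : qb = q / l)
    (lL rbL : ℝ → ℝ)
    (hlL : ∀ L : ℝ, lL L = Real.sqrt (p ^ 2 + q ^ 2 + u3 ^ 2 / L))
    (hrbL : ∀ L : ℝ, rbL L = (u3 / Real.sqrt L) / lL L)
    (hw : w = d2 / g1 - d3) (hw0 : w = 0) (hw' : w' = 0)
    (α : ℝ) (hα : α = qb * (d1 / g1) - pb * d3)
    (A B : ℝ → ℝ) (C : ℝ)
    (hA : ∀ L : ℝ, A L = (dd1 * g1 - d1 ^ 2) / g1 ^ 2 + L * w * (d2 / g1))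
    (hB : ∀ L : ℝ, B L = dd3 - L * w * (d1 / g1))
    (hC : C = w' - w * (d1 / g1))
    (c1 c2 : ℝ → ℝ)
    (hc1 : ∀ L : ℝ, c1 L = qb * A L - pb * B L)
    (hc2 : ∀ L : ℝ, c2 L = rbL L * pb * A L + rbL L * qb * B L
        - (l / lL L) * Real.sqrt L * C)
    (hα0 : α ≠ 0) :
    Tendsto (fun L : ℝ =>
        (c1 L * ((lL L / l) * Real.sqrt L * w) + c2 L * α)
          / (Real.sqrt (α ^ 2 + (lL L / l) ^ 2 * L * w ^ 2)) ^ 3)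
      atTop (nhds 0) ∧
    (fun L : ℝ => c1 L * ((lL L / l) * Real.sqrt L * w) + c2 L * α)
      =O[atTop] (fun L : ℝ => (Real.sqrt L)⁻¹) := by

  have hlpos : 0 < l := by rw [hl]; exact Real.sqrt_pos.mpr hpq
  subst hw0
  subst hw'
  have hC0 : C = 0 := by rw [hC]; ring
  set K : ℝ := pb * ((dd1 * g1 - d1 ^ 2) / g1 ^ 2) + qb * dd3 with hK
  have hf : ∀ L : ℝ, c1 L * ((lL L / l) * Real.sqrt L * 0) + c2 L * α
      = rbL L * K * α := by
    intro L
    rw [hc2, hA, hB, hC0, hK]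
    ring
  have hlLl : ∀ L : ℝ, 0 < L → l ≤ lL L := by
    intro L hL
    rw [hl, hlL]
    apply Real.sqrt_le_sqrt
    nlinarith [sq_nonneg u3, div_nonneg (sq_nonneg u3) hL.le]
  have hlLpos : ∀ L : ℝ, 0 < L → 0 < lL L := fun L hL => lt_of_lt_of_le hlpos (hlLl L hL)
  -- limit of rbL
  have hsq : Tendsto Real.sqrt atTop atTop := by
    refine tendsto_atTop_atTop.mpr fun b => ⟨b ^ 2, fun a ha => ?_⟩
    calc b ≤ |b| := le_abs_self b
      _ = Real.sqrt (b ^ 2) := (Real.sqrt_sq_eq_abs b).symm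
      _ ≤ Real.sqrt a := Real.sqrt_le_sqrt ha
  have h1 : Tendsto (fun L : ℝ => u3 / Real.sqrt L) atTop (nhds 0) :=
    tendsto_const_nhds.div_atTop hsq
  have h2 : Tendsto lL atTop (nhds l) := by
    have h3 : Tendsto (fun L : ℝ => p ^ 2 + q ^ 2 + u3 ^ 2 / L) atTop
        (nhds (p ^ 2 + q ^ 2)) := by
      have := (tendsto_const_nhds (x := u3 ^ 2) (f := atTop)).div_atTop tendsto_id
      simpa using (tendsto_const_nhds (x := p ^ 2 + q ^ 2) (f := atTop)).add this
    have h4 := (Real.continuous_sqrt.tendsto (p ^ 2 + q ^ 2)).comp h3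
    rw [← hl] at h4
    refine h4.congr fun L => ?_
    rw [hlL]; rfl
  have hrb0 : Tendsto rbL atTop (nhds 0) := by
    have := h1.div h2 (ne_of_gt hlpos)
    simp only [zero_div] at this
    refine this.congr fun L => (hrbL L).symm
  constructor
  · have heq : (fun L : ℝ =>
        (c1 L * ((lL L / l) * Real.sqrt L * 0) + c2 L * α)
          / (Real.sqrt (α ^ 2 + (lL L / l) ^ 2 * L * 0 ^ 2)) ^ 3)
        = fun L : ℝ => rbL L * K * α / |α| ^ 3 := by
      funext L
      rw [hf L]
      congr 1
      rw [show α ^ 2 + (lL L / l) ^ 2 * L * 0 ^ 2 = α ^ 2 by ring, Real.sqrt_sq_eq_abs]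
    rw [heq]
    have := ((hrb0.mul_const K).mul_const α).div_const (|α| ^ 3)
    simpa using this
  · simp only [hf]
    rw [Asymptotics.isBigO_iff]
    refine ⟨|u3| / l * |K| * |α|, ?_⟩
    filter_upwards [eventually_gt_atTop 0] with L hL
    have hsL : 0 < Real.sqrt L := Real.sqrt_pos.mpr hL
    have hlLp := hlLpos L hL
    rw [hrbL L]
    simp only [Real.norm_eq_abs, abs_mul, abs_div, abs_inv,
      abs_of_pos hsL, abs_of_pos hlLp]
    have h5 : |u3| / Real.sqrt L / lL L ≤ |u3| / l * (Real.sqrt L)⁻¹ := by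
      have e : |u3| / l * (Real.sqrt L)⁻¹ = |u3| / (Real.sqrt L * l) := by
        rw [mul_comm (Real.sqrt L) l, ← div_div, div_eq_mul_inv (|u3| / l)]
      rw [div_div, e]
      gcongr
      exact hlLl L hL
    calc |u3| / Real.sqrt L / lL L * |K| * |α|
        ≤ |u3| / l * (Real.sqrt L)⁻¹ * |K| * |α| :=
          mul_le_mul_of_nonneg_right
            (mul_le_mul_of_nonneg_right h5 (abs_nonneg _)) (abs_nonneg _)
      _ = |u3| / l * |K| * |α| * (Real.sqrt L)⁻¹ := by ring
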